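/- Let m ≤ n, μ a Borel probability measure on ℝᵐ with finite p-th moment, and ν a Borel probability measure on ℝⁿ with finite p-th moment. The augmented p-Wasserstein distance Ŵ_p(μ,ν) = inf_{β ∈ Φ⁻(ν,m)} W_p(μ,β) equals 0 if and only if there exist V ∈ O(m,n) and b ∈ ℝᵐ such that φ_{V,b}(ν) = μ. -/

import Mathlib

open MeasureTheory ENNReal

noncomputable section

/-- The affine map `x ↦ Vx + b` from `ℝⁿ` to `ℝᵐ` (Euclidean spaces). -/
def phiAff {m n : ℕ} (V : Matrix (Fin m) (Fin n) ℝ)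
    (b : EuclideanSpace ℝ (Fin m)) (x : EuclideanSpace ℝ (Fin n)) :
    EuclideanSpace ℝ (Fin m) :=
  (EuclideanSpace.equiv (Fin m) ℝ).symm
    (V.mulVec (EuclideanSpace.equiv (Fin n) ℝ x) + (EuclideanSpace.equiv (Fin m) ℝ) b)

/-- The `p`-Wasserstein distance: infimum over couplings of
`(∫ ‖x − y‖^p dγ)^{1/p}` (Euclidean norm). -/
def wassersteinDist (p : ℝ) {k : ℕ}
    (μ ν : Measure (EuclideanSpace ℝ (Fin k))) : ℝ :=
  sInf {r : ℝ | ∃ γ : Measure (EuclideanSpace ℝ (Fin k) × EuclideanSpace ℝ (Fin k)),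
    γ.map Prod.fst = μ ∧ γ.map Prod.snd = ν ∧
    r = (∫ z, ‖z.1 - z.2‖ ^ p ∂γ) ^ (1 / p)}

/-- The `f`-divergence `D_f(μ‖ν) = ∫ f(dμ/dν) dν`. -/
def fDivergence (f : ℝ → ℝ) {k : ℕ}
    (μ ν : Measure (EuclideanSpace ℝ (Fin k))) : ℝ :=
  ∫ x, f ((μ.rnDeriv ν x).toReal) ∂ν

/-- The Kullback–Leibler divergence `∫ log(dμ/dν) dμ`. -/
def klDivergence {k : ℕ} (μ ν : Measure (EuclideanSpace ℝ (Fin k))) : ℝ :=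
  ∫ x, Real.log ((μ.rnDeriv ν x).toReal) ∂μ

/-- The mixture `(1−θ)μ + θν`. -/
def mixture (θ : ℝ) {k : ℕ} (μ ν : Measure (EuclideanSpace ℝ (Fin k))) :
    Measure (EuclideanSpace ℝ (Fin k)) :=
  ENNReal.ofReal (1 - θ) • μ + ENNReal.ofReal θ • ν

/-- The θ-weighted Jensen–Shannon divergence. -/
def jsDivergence (θ : ℝ) {k : ℕ} (μ ν : Measure (EuclideanSpace ℝ (Fin k))) : ℝ :=
  (1 / 2) * klDivergence μ (mixture θ μ ν) + (1 / 2) * klDivergence ν (mixture θ ν μ)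

/-- The total variation metric `sup_A |μ(A) − ν(A)|`. -/
def tvDist {k : ℕ} (μ ν : Measure (EuclideanSpace ℝ (Fin k))) : ℝ :=
  sSup {r : ℝ | ∃ A : Set (EuclideanSpace ℝ (Fin k)), MeasurableSet A ∧
    r = |(μ A).toReal - (ν A).toReal|}

/-- The Hellinger squared divergence `∫ (√(dμ/dν) − 1)² dν`. -/
def hellingerSq {k : ℕ} (μ ν : Measure (EuclideanSpace ℝ (Fin k))) : ℝ :=
  ∫ x, (Real.sqrt ((μ.rnDeriv ν x).toReal) - 1) ^ 2 ∂ν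

/-- `ν` has a strictly positive density w.r.t. Lebesgue measure. -/
def HasPosDensity {k : ℕ} (ν : Measure (EuclideanSpace ℝ (Fin k))) : Prop :=
  ∃ t : EuclideanSpace ℝ (Fin k) → ℝ, Measurable t ∧ (∀ x, 0 < t x) ∧
    ν = volume.withDensity fun x => ENNReal.ofReal (t x)

end

set_option linter.unusedSectionVars false
set_option maxHeartbeats 1000000
noncomputable section
namespace AW
open MeasureTheory ENNReal Metric

open MeasureTheory ENNReal

abbrev E (k : ℕ) := EuclideanSpace ℝ (Fin k)

variable {m n : ℕ}

/-- V∙ as a continuous linear map between Euclidean spaces. -/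
def matCLM (V : Matrix (Fin m) (Fin n) ℝ) : E n →L[ℝ] E m :=
  LinearMap.toContinuousLinearMap
    ((((EuclideanSpace.equiv (Fin m) ℝ).symm : (Fin m → ℝ) ≃L[ℝ] E m).toLinearMap.comp V.mulVecLin).comp
      ((EuclideanSpace.equiv (Fin n) ℝ : E n ≃L[ℝ] _)).toLinearMap)

lemma phiAff_eq (V : Matrix (Fin m) (Fin n) ℝ) (b : E m) (x : E n) :
    phiAff V b x = matCLM V x + b := by
  simp only [phiAff, matCLM]
  ext i
  simp [Matrix.mulVecLin, EuclideanSpace.equiv]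

lemma continuous_phiAff (V : Matrix (Fin m) (Fin n) ℝ) (b : E m) :
    Continuous (phiAff V b) := by
  simp only [funext (phiAff_eq V b)]
  exact (matCLM V).continuous.add continuous_const

lemma measurable_phiAff (V : Matrix (Fin m) (Fin n) ℝ) (b : E m) :
    Measurable (phiAff V b) := (continuous_phiAff V b).measurable

instance map_prob (ν : Measure (E n)) [IsProbabilityMeasure ν]
    (V : Matrix (Fin m) (Fin n) ℝ) (b : E m) :
    IsProbabilityMeasure (ν.map (phiAff V b)) :=
  Measure.isProbabilityMeasure_map (measurable_phiAff V b).aemeasurable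


section general
variable {p : ℝ} {X : Type*} [NormedAddCommGroup X] [NormedSpace ℝ X]
  [MeasurableSpace X] [BorelSpace X] [SecondCountableTopology X] [CompleteSpace X]


variable {p : ℝ} {X : Type*} [NormedAddCommGroup X] [NormedSpace ℝ X]
  [MeasurableSpace X] [BorelSpace X] [SecondCountableTopology X] [CompleteSpace X]

lemma add_rpow_le (hp : 0 ≤ p) {a b : ℝ} (ha : 0 ≤ a) (hb : 0 ≤ b) :
    (a + b) ^ p ≤ 2 ^ p * (a ^ p + b ^ p) := by
  have hmax : a + b ≤ 2 * max a b := by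
    rcases max_cases a b with ⟨h, _⟩ | ⟨h, _⟩ <;> rw [h] <;>
      nlinarith [le_max_left a b, le_max_right a b]
  calc (a + b) ^ p ≤ (2 * max a b) ^ p :=
        Real.rpow_le_rpow (by linarith) hmax hp
    _ = 2 ^ p * (max a b) ^ p :=
        Real.mul_rpow (by norm_num) (le_max_of_le_left ha)
    _ ≤ 2 ^ p * (a ^ p + b ^ p) := by
        gcongr
        rcases max_cases a b with ⟨h, _⟩ | ⟨h, _⟩ <;> rw [h] <;>
          [nlinarith [Real.rpow_nonneg hb p]; nlinarith [Real.rpow_nonneg ha p]]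

lemma self_le_one_add_rpow (hp : 1 ≤ p) {a : ℝ} (ha : 0 ≤ a) :
    a ≤ 1 + a ^ p := by
  rcases le_or_gt a 1 with h | h
  · nlinarith [Real.rpow_nonneg ha p]
  · calc a = a ^ (1:ℝ) := (Real.rpow_one a).symm
      _ ≤ a ^ p := Real.rpow_le_rpow_of_exponent_le h.le hp
      _ ≤ 1 + a ^ p := by linarith

lemma continuous_norm_rpow (hp : 1 ≤ p) {Y : Type*} [NormedAddCommGroup Y] :
    Continuous fun x : Y => ‖x‖ ^ p :=
  continuous_norm.rpow_const (fun _ => Or.inr (by linarith))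

section coupling

variable {μ β : Measure X} [IsProbabilityMeasure μ] [IsProbabilityMeasure β]
  {γ : Measure (X × X)}

lemma coupling_prob (h1 : γ.map Prod.fst = μ) : IsProbabilityMeasure γ := by
  constructor
  have := congrArg (fun ρ => ρ Set.univ) h1
  simpa [Measure.map_apply measurable_fst MeasurableSet.univ] using this

lemma coupling_fst_integrable {f : X → ℝ} (hf : Continuous f)
    (h1 : γ.map Prod.fst = μ) (h : Integrable f μ) :
    Integrable (fun z : X × X => f z.1) γ := by
  rw [← h1] at h
  exact (integrable_map_measure hf.aestronglyMeasurable
    measurable_fst.aemeasurable).mp h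

lemma coupling_snd_integrable {f : X → ℝ} (hf : Continuous f)
    (h2 : γ.map Prod.snd = β) (h : Integrable f β) :
    Integrable (fun z : X × X => f z.2) γ := by
  rw [← h2] at h
  exact (integrable_map_measure hf.aestronglyMeasurable
    measurable_snd.aemeasurable).mp h

lemma cost_integrable (hp : 1 ≤ p)
    (hμ : Integrable (fun x => ‖x‖ ^ p) μ) (hβ : Integrable (fun x => ‖x‖ ^ p) β)
    (h1 : γ.map Prod.fst = μ) (h2 : γ.map Prod.snd = β) :
    Integrable (fun z : X × X => ‖z.1 - z.2‖ ^ p) γ := by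
  have hp0 : (0:ℝ) ≤ p := by linarith
  have i1 := coupling_fst_integrable (continuous_norm_rpow hp) h1 hμ
  have i2 := coupling_snd_integrable (continuous_norm_rpow hp) h2 hβ
  refine Integrable.mono' (((i1.add i2).const_mul (2 ^ p)))
    ((continuous_norm_rpow hp).comp (continuous_fst.sub continuous_snd)).aestronglyMeasurable ?_
  filter_upwards with z
  rw [Real.norm_eq_abs, abs_of_nonneg (Real.rpow_nonneg (norm_nonneg _) p)]
  calc ‖z.1 - z.2‖ ^ p ≤ (‖z.1‖ + ‖z.2‖) ^ p :=
        Real.rpow_le_rpow (norm_nonneg _) (norm_sub_le _ _) hp0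
    _ ≤ 2 ^ p * (‖z.1‖ ^ p + ‖z.2‖ ^ p) := add_rpow_le hp0 (norm_nonneg _) (norm_nonneg _)


lemma key_lipschitz_bound (hp : 1 ≤ p)
    (hμ : Integrable (fun x => ‖x‖ ^ p) μ) (hβ : Integrable (fun x => ‖x‖ ^ p) β)
    (h1 : γ.map Prod.fst = μ) (h2 : γ.map Prod.snd = β)
    {g : X → ℝ} {K : NNReal} (hg : LipschitzWith K g) (hg0 : ∀ x, 0 ≤ g x) (hg1 : ∀ x, g x ≤ 1)
    {ε : ℝ} (hε : 0 < ε) (hcost : ∫ z, ‖z.1 - z.2‖ ^ p ∂γ ≤ ε ^ (p + 1 : ℝ)) :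
    |∫ x, g x ∂μ - ∫ y, g y ∂β| ≤ (K : ℝ) * ε + 2 * ε := by
  have hγ : IsProbabilityMeasure γ := coupling_prob h1
  have hp0 : (0:ℝ) < p := by linarith
  have hci := cost_integrable hp hμ hβ h1 h2
  -- the bad set
  set A : Set (X × X) := {z | ε < ‖z.1 - z.2‖} with hA
  have hAm : MeasurableSet A :=
    measurableSet_lt measurable_const (continuous_fst.sub continuous_snd).measurable.norm
  -- Markov
  have hmarkov : (γ A).toReal ≤ ε := by
    have hsub : A ⊆ {z | ε ^ p ≤ ‖z.1 - z.2‖ ^ p} := by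
      intro z hz
      exact Real.rpow_le_rpow hε.le (le_of_lt hz) hp0.le
    have h3 := mul_meas_ge_le_integral_of_nonneg
      (Filter.Eventually.of_forall fun z => Real.rpow_nonneg (norm_nonneg _) p) hci (ε ^ p)
    have h4 : (γ A).toReal ≤ (γ {z | ε ^ p ≤ ‖z.1 - z.2‖ ^ p}).toReal := by
      apply ENNReal.toReal_mono (measure_ne_top _ _) (measure_mono hsub)
    have hεp : (0:ℝ) < ε ^ p := Real.rpow_pos_of_pos hε p
    have h5 : ε ^ p * (γ {z | ε ^ p ≤ ‖z.1 - z.2‖ ^ p}).toReal ≤ ε ^ (p+1:ℝ) :=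
      le_trans h3 hcost
    have h6 : ε ^ (p+1:ℝ) = ε ^ p * ε := by
      rw [Real.rpow_add hε, Real.rpow_one]
    nlinarith [h4, h5, ENNReal.toReal_nonneg (a := γ A)]
  -- bounded measurable integrands
  have hgc : Continuous g := hg.continuous
  have hint1 : Integrable (fun z : X × X => g z.1) γ :=
    coupling_fst_integrable hgc h1 (by
      refine Integrable.mono' (integrable_const 1) hgc.aestronglyMeasurable ?_
      filter_upwards with x
      rw [Real.norm_eq_abs, abs_of_nonneg (hg0 x)]; exact hg1 x)
  have hint2 : Integrable (fun z : X × X => g z.2) γ :=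
    coupling_snd_integrable hgc h2 (by
      refine Integrable.mono' (integrable_const 1) hgc.aestronglyMeasurable ?_
      filter_upwards with x
      rw [Real.norm_eq_abs, abs_of_nonneg (hg0 x)]; exact hg1 x)
  -- rewrite the integrals through the coupling
  have e1 : ∫ x, g x ∂μ = ∫ z, g z.1 ∂γ := by
    rw [← h1, integral_map measurable_fst.aemeasurable hgc.aestronglyMeasurable]
  have e2 : ∫ y, g y ∂β = ∫ z, g z.2 ∂γ := by
    rw [← h2, integral_map measurable_snd.aemeasurable hgc.aestronglyMeasurable]
  rw [e1, e2, ← integral_sub hint1 hint2]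
  have hptw : ∀ z : X × X, |g z.1 - g z.2| ≤ (K : ℝ) * ε + A.indicator (fun _ => 2) z := by
    intro z
    by_cases hz : z ∈ A
    · rw [Set.indicator_of_mem hz]
      have : |g z.1 - g z.2| ≤ 1 := by
        rw [abs_le]; constructor <;> nlinarith [hg0 z.1, hg1 z.1, hg0 z.2, hg1 z.2]
      nlinarith [K.coe_nonneg, hε]
    · rw [Set.indicator_of_notMem hz]
      have hd : dist z.1 z.2 ≤ ε := by
        simp only [hA, Set.mem_setOf_eq, not_lt] at hz
        rwa [dist_eq_norm]
      have := hg.dist_le_mul z.1 z.2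
      rw [Real.dist_eq] at this
      have h7 : |g z.1 - g z.2| ≤ (K:ℝ) * ε := by
        calc |g z.1 - g z.2| ≤ (K:ℝ) * dist z.1 z.2 := this
          _ ≤ (K:ℝ) * ε := mul_le_mul_of_nonneg_left hd K.coe_nonneg
      linarith
  have hib : Integrable (fun z : X × X => (K : ℝ) * ε + A.indicator (fun _ => 2) z) γ :=
    (integrable_const _).add ((integrable_const (2:ℝ)).indicator hAm)
  calc |∫ z, (g z.1 - g z.2) ∂γ| ≤ ∫ z, |g z.1 - g z.2| ∂γ := by
        simpa [Real.norm_eq_abs] using norm_integral_le_integral_norm (fun z : X × X => g z.1 - g z.2) (μ := γ)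
    _ ≤ ∫ z, ((K : ℝ) * ε + A.indicator (fun _ => 2) z) ∂γ :=
        integral_mono (hint1.sub hint2).abs hib hptw
    _ = (K : ℝ) * ε + 2 * (γ A).toReal := by
        rw [integral_add (integrable_const _) ((integrable_const (2:ℝ)).indicator hAm),
          integral_const, integral_indicator_const _ hAm]
        simp [mul_comm]; rfl
    _ ≤ (K : ℝ) * ε + 2 * ε := by nlinarith [hmarkov]

lemma mean_diff_le (hp : 1 ≤ p)
    (hμ : Integrable (fun x => ‖x‖ ^ p) μ) (hβ : Integrable (fun x => ‖x‖ ^ p) β)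
    (h1 : γ.map Prod.fst = μ) (h2 : γ.map Prod.snd = β) :
    ‖(∫ x, x ∂μ) - ∫ y, y ∂β‖ ≤ 1 + ∫ z, ‖z.1 - z.2‖ ^ p ∂γ := by
  have hγ : IsProbabilityMeasure γ := coupling_prob h1
  have hci := cost_integrable hp hμ hβ h1 h2
  have hidμ : Integrable (fun x : X => x) μ := by
    refine (integrable_norm_iff (f := fun x : X => x)
      continuous_id.aestronglyMeasurable).mp ?_
    refine Integrable.mono' ((integrable_const 1).add hμ)
      continuous_norm.aestronglyMeasurable ?_
    filter_upwards with x
    rw [Real.norm_eq_abs, abs_of_nonneg (norm_nonneg x)]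
    exact self_le_one_add_rpow hp (norm_nonneg x)
  have hidβ : Integrable (fun x : X => x) β := by
    refine (integrable_norm_iff (f := fun x : X => x)
      continuous_id.aestronglyMeasurable).mp ?_
    refine Integrable.mono' ((integrable_const 1).add hβ)
      continuous_norm.aestronglyMeasurable ?_
    filter_upwards with x
    rw [Real.norm_eq_abs, abs_of_nonneg (norm_nonneg x)]
    exact self_le_one_add_rpow hp (norm_nonneg x)
  have hi1 : Integrable (fun z : X × X => z.1) γ := by
    rw [← h1] at hidμ
    exact (integrable_map_measure continuous_id.aestronglyMeasurable
      measurable_fst.aemeasurable).mp hidμ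
  have hi2 : Integrable (fun z : X × X => z.2) γ := by
    rw [← h2] at hidβ
    exact (integrable_map_measure continuous_id.aestronglyMeasurable
      measurable_snd.aemeasurable).mp hidβ
  have e1 : ∫ x, x ∂μ = ∫ z, z.1 ∂γ := by
    rw [← h1]
    exact integral_map (f := fun x : X => x) measurable_fst.aemeasurable
      continuous_id.aestronglyMeasurable
  have e2 : ∫ y, y ∂β = ∫ z, z.2 ∂γ := by
    rw [← h2]
    exact integral_map (f := fun x : X => x) measurable_snd.aemeasurable
      continuous_id.aestronglyMeasurable
  rw [e1, e2, ← integral_sub hi1 hi2]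
  calc ‖∫ z, (z.1 - z.2) ∂γ‖ ≤ ∫ z, ‖z.1 - z.2‖ ∂γ :=
        norm_integral_le_integral_norm _
    _ ≤ ∫ z, (1 + ‖z.1 - z.2‖ ^ p) ∂γ := by
        refine integral_mono (hi1.sub hi2).norm ((integrable_const 1).add hci) ?_
        intro z
        exact self_le_one_add_rpow hp (norm_nonneg _)
    _ = 1 + ∫ z, ‖z.1 - z.2‖ ^ p ∂γ := by
        rw [integral_add (integrable_const 1) hci, integral_const]
        simp

end coupling


end general

section metricX
variable {X : Type*} [MetricSpace X] [MeasurableSpace X] [BorelSpace X]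


variable {X : Type*} [MetricSpace X] [MeasurableSpace X] [BorelSpace X]

/-- Mollified indicator of a set `C` at scale `δ`. -/
def moll (C : Set X) (δ : ℝ) (x : X) : ℝ := max (1 - infDist x C / δ) 0

lemma moll_nonneg (C : Set X) (δ : ℝ) (x : X) : 0 ≤ moll C δ x := le_max_right _ _

lemma moll_le_one (C : Set X) {δ : ℝ} (hδ : 0 < δ) (x : X) : moll C δ x ≤ 1 := by
  apply max_le _ zero_le_one
  have h := infDist_nonneg (x := x) (s := C)
  have : 0 ≤ infDist x C / δ := by positivity
  linarith

lemma moll_lipschitz (C : Set X) {δ : ℝ} (hδ : 0 < δ) :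
    LipschitzWith (Real.toNNReal (1 / δ)) (moll C δ) := by
  apply LipschitzWith.of_dist_le_mul
  intro x y
  rw [Real.dist_eq]
  have h1 : |moll C δ x - moll C δ y| ≤ |(1 - infDist x C / δ) - (1 - infDist y C / δ)| :=
    abs_max_sub_max_le_abs _ _ _
  have h2 : (1 - infDist x C / δ) - (1 - infDist y C / δ) = (infDist y C - infDist x C) / δ := by
    ring
  have h3 : |infDist y C - infDist x C| ≤ dist x y := by
    rw [abs_sub_le_iff]
    constructor
    · have h := infDist_le_infDist_add_dist (x := y) (y := x) (s := C)
      rw [dist_comm] at h; linarith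
    · have h := infDist_le_infDist_add_dist (x := x) (y := y) (s := C)
      linarith
  rw [h2, abs_div, abs_of_pos hδ] at h1
  have h4 : Real.toNNReal (1 / δ) * dist x y = dist x y / δ := by
    rw [Real.coe_toNNReal _ (by positivity)]
    ring
  rw [h4]
  calc |moll C δ x - moll C δ y| ≤ |infDist y C - infDist x C| / δ := h1
    _ ≤ dist x y / δ := by gcongr
 
lemma moll_continuous (C : Set X) {δ : ℝ} (hδ : 0 < δ) : Continuous (moll C δ) :=
  (moll_lipschitz C hδ).continuous

lemma moll_mem (C : Set X) {δ : ℝ} (x : X) (hx : x ∈ C) : moll C δ x = 1 := by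
  simp [moll, infDist_zero_of_mem hx]

lemma moll_tendsto_indicator {C : Set X} (hC : IsClosed C) (hne : C.Nonempty) (x : X) :
    Filter.Tendsto (fun j : ℕ => moll C (1 / (j + 1 : ℝ)) x) Filter.atTop
      (nhds (C.indicator (fun _ => (1:ℝ)) x)) := by
  by_cases hx : x ∈ C
  · simp only [Set.indicator_of_mem hx, moll_mem C x hx]
    exact tendsto_const_nhds
  · rw [Set.indicator_of_notMem hx]
    have hpos : 0 < infDist x C := by
      rwa [hC.notMem_iff_infDist_pos hne] at hx
    apply Filter.Tendsto.congr' _ tendsto_const_nhds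
    rw [Filter.eventuallyEq_iff_exists_mem]
    obtain ⟨N, hN⟩ := exists_nat_gt (1 / infDist x C)
    refine ⟨Set.Ici N, Filter.mem_atTop N, fun j hj => ?_⟩
    have hj' : (N : ℝ) ≤ j := Nat.cast_le.mpr hj
    have h1 : 1 / infDist x C < (j:ℝ) + 1 := by linarith
    have h2 : 1 / ((j:ℝ) + 1) < infDist x C := by
      rw [div_lt_iff₀ (by positivity)]
      rw [div_lt_iff₀ hpos] at h1
      linarith
    have : 1 - infDist x C / (1 / ((j:ℝ)+1)) < 0 := by
      rw [sub_neg, lt_div_iff₀ (by positivity)]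
      nlinarith
    simp only [moll]
    rw [max_eq_right this.le]

lemma tendsto_integral_moll {C : Set X} (hC : IsClosed C) (hne : C.Nonempty)
    (ρ : Measure X) [IsProbabilityMeasure ρ] :
    Filter.Tendsto (fun j : ℕ => ∫ x, moll C (1 / (j + 1 : ℝ)) x ∂ρ) Filter.atTop
      (nhds (ρ C).toReal) := by
  have hCm : MeasurableSet C := hC.measurableSet
  have key : ∫ x, C.indicator (fun _ => (1:ℝ)) x ∂ρ = (ρ C).toReal := by
    rw [integral_indicator_const _ hCm]; simp; rfl
  rw [← key]
  refine tendsto_integral_of_dominated_convergence (fun _ => (1:ℝ)) ?_ (integrable_const 1) ?_ ?_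
  · intro j
    exact (moll_continuous C (by positivity)).aestronglyMeasurable
  · intro j
    filter_upwards with x
    rw [Real.norm_eq_abs, abs_of_nonneg (moll_nonneg _ _ _)]
    exact moll_le_one _ (by positivity) _
  · filter_upwards with x
    exact moll_tendsto_indicator hC hne x

lemma ext_of_closed (ρ1 ρ2 : Measure X) [IsProbabilityMeasure ρ1] [IsProbabilityMeasure ρ2]
    (h : ∀ C : Set X, IsClosed C → ρ1 C = ρ2 C) : ρ1 = ρ2 := by
  refine ext_of_generate_finite {s : Set X | IsClosed s}
    (BorelSpace.measurable_eq.trans borel_eq_generateFrom_isClosed) ?_ (fun s hs => h s hs) ?_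
  · intro s hs t ht _
    exact hs.inter ht
  · simp


end metricX

section matrices
variable {m n : ℕ} {p : ℝ}


/-- An `m × n` matrix with orthonormal rows, for `m ≤ n`. -/
lemma exists_ortho (hmn : m ≤ n) :
    ∃ V : Matrix (Fin m) (Fin n) ℝ, V * V.transpose = 1 := by
  refine ⟨Matrix.of fun i j => if j = Fin.castLE hmn i then 1 else 0, ?_⟩
  ext i i'
  simp only [Matrix.mul_apply, Matrix.transpose_apply, Matrix.of_apply]
  rw [Finset.sum_eq_single (Fin.castLE hmn i)]
  · simp only [if_pos rfl]
    by_cases h : i = i'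
    · subst h; simp [Matrix.one_apply]
    · have : Fin.castLE hmn i ≠ Fin.castLE hmn i' :=
        fun hc => h (Fin.castLE_injective hmn hc)
      simp [Matrix.one_apply, h, if_neg this.symm]  -- careful
  · intro j _ hj
    simp [if_neg hj]
  · intro h
    exact absurd (Finset.mem_univ _) h

lemma entries_le_one {V : Matrix (Fin m) (Fin n) ℝ} (hV : V * V.transpose = 1)
    (i : Fin m) (j : Fin n) : |V i j| ≤ 1 := by
  have h1 : (V * V.transpose) i i = 1 := by rw [hV]; simp [Matrix.one_apply]
  rw [Matrix.mul_apply] at h1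
  simp only [Matrix.transpose_apply] at h1
  have h2 : V i j * V i j ≤ ∑ j', V i j' * V i j' := by
    apply Finset.single_le_sum (f := fun j' => V i j' * V i j') (fun j' _ => mul_self_nonneg _)
      (Finset.mem_univ j)
  nlinarith [sq_abs (V i j), abs_nonneg (V i j)]


end matrices

section euclid
variable {m n : ℕ} {p : ℝ}

/-- `integrable_id_of_moment` in our setting. -/
lemma integrable_id_of_moment' (hp : 1 ≤ p) {k : ℕ} {ρ : Measure (E k)}
    [IsProbabilityMeasure ρ] (h : Integrable (fun x => ‖x‖ ^ p) ρ) :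
    Integrable (fun x : E k => x) ρ := by
  refine (integrable_norm_iff (f := fun x : E k => x)
    continuous_id.aestronglyMeasurable).mp ?_
  refine Integrable.mono' ((integrable_const 1).add h)
    continuous_norm.aestronglyMeasurable ?_
  filter_upwards with x
  rw [Real.norm_eq_abs, abs_of_nonneg (norm_nonneg x)]
  exact self_le_one_add_rpow hp (norm_nonneg x)

lemma matCLM_apply (V : Matrix (Fin m) (Fin n) ℝ) (x : E n) (i : Fin m) :
    matCLM V x i = ∑ j, V i j * x j := rfl

lemma norm_matCLM_le {V : Matrix (Fin m) (Fin n) ℝ} (hV : ∀ i j, |V i j| ≤ 1) (x : E n) :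
    ‖matCLM V x‖ ≤ Real.sqrt m * ∑ j, |x j| := by
  have hx0 : 0 ≤ ∑ j, |x j| := Finset.sum_nonneg fun j _ => abs_nonneg _
  rw [EuclideanSpace.norm_eq]
  have hcoord : ∀ i, ‖matCLM V x i‖ ≤ ∑ j, |x j| := by
    intro i
    rw [matCLM_apply, Real.norm_eq_abs]
    calc |∑ j, V i j * x j| ≤ ∑ j, |V i j * x j| := Finset.abs_sum_le_sum_abs _ _
      _ ≤ ∑ j, |x j| := by
          apply Finset.sum_le_sum
          intro j _
          rw [abs_mul]
          nlinarith [hV i j, abs_nonneg (x j), abs_nonneg (V i j)]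
  calc Real.sqrt (∑ i, ‖matCLM V x i‖ ^ 2) ≤ Real.sqrt (∑ _i : Fin m, (∑ j, |x j|) ^ 2) := by
        apply Real.sqrt_le_sqrt
        apply Finset.sum_le_sum
        intro i _
        have h := hcoord i
        nlinarith [norm_nonneg (matCLM V x i)]
    _ = Real.sqrt ((m : ℝ) * (∑ j, |x j|) ^ 2) := by
        rw [Finset.sum_const, Finset.card_univ, Fintype.card_fin, nsmul_eq_mul]
    _ = Real.sqrt m * ∑ j, |x j| := by
        rw [Real.sqrt_mul (Nat.cast_nonneg m), Real.sqrt_sq hx0]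

lemma moment_map (hp : 1 ≤ p) (ν : Measure (E n)) [IsProbabilityMeasure ν]
    (hν : Integrable (fun x => ‖x‖ ^ p) ν) (V : Matrix (Fin m) (Fin n) ℝ) (b : E m) :
    Integrable (fun y => ‖y‖ ^ p) (ν.map (phiAff V b)) := by
  have hp0 : (0:ℝ) ≤ p := by linarith
  rw [integrable_map_measure (continuous_norm_rpow hp).aestronglyMeasurable
    (measurable_phiAff V b).aemeasurable]
  set C := ‖matCLM V‖ + ‖b‖ + 1 with hC
  have hC0 : 0 < C := by positivity
  have hbd : ∀ x : E n, ‖phiAff V b x‖ ≤ C * (1 + ‖x‖) := by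
    intro x
    rw [phiAff_eq]
    calc ‖matCLM V x + b‖ ≤ ‖matCLM V x‖ + ‖b‖ := norm_add_le _ _
      _ ≤ ‖matCLM V‖ * ‖x‖ + ‖b‖ := by gcongr; exact (matCLM V).le_opNorm x
      _ ≤ C * (1 + ‖x‖) := by
          have h1 := norm_nonneg (matCLM V)
          have h2 := norm_nonneg b
          have h3 := norm_nonneg x
          nlinarith
  refine Integrable.mono' ((((integrable_const 1).add hν).const_mul (2 ^ p)).const_mul (C ^ p))
    ((continuous_norm_rpow hp).comp (continuous_phiAff V b)).aestronglyMeasurable ?_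
  filter_upwards with x
  simp only [Function.comp_apply, Pi.add_apply]
  rw [Real.norm_eq_abs, abs_of_nonneg (Real.rpow_nonneg (norm_nonneg _) p)]
  calc ‖phiAff V b x‖ ^ p ≤ (C * (1 + ‖x‖)) ^ p :=
        Real.rpow_le_rpow (norm_nonneg _) (hbd x) hp0
    _ = C ^ p * (1 + ‖x‖) ^ p := Real.mul_rpow hC0.le (by positivity)
    _ ≤ C ^ p * (2 ^ p * ((1:ℝ) ^ p + ‖x‖ ^ p)) := by
        have := add_rpow_le hp0 (zero_le_one (α := ℝ)) (norm_nonneg x)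
        gcongr
    _ = C ^ p * (2 ^ p * (1 + ‖x‖ ^ p)) := by rw [Real.one_rpow]

lemma integral_map_phiAff (hp : 1 ≤ p) (ν : Measure (E n)) [IsProbabilityMeasure ν]
    (hν : Integrable (fun x => ‖x‖ ^ p) ν) (V : Matrix (Fin m) (Fin n) ℝ) (b : E m) :
    ∫ y, y ∂(ν.map (phiAff V b)) = matCLM V (∫ x, x ∂ν) + b := by
  have hid : Integrable (fun x : E n => x) ν := integrable_id_of_moment' hp hν
  rw [integral_map (f := fun y : E m => y) (measurable_phiAff V b).aemeasurable
    continuous_id.aestronglyMeasurable]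
  have he : ∀ x, phiAff V b x = matCLM V x + b := phiAff_eq V b
  simp_rw [he]
  rw [integral_add ((matCLM V).integrable_comp hid) (integrable_const b),
    (matCLM V).integral_comp_comm hid, integral_const]
  simp

lemma tendsto_phiAff {Vs : ℕ → Matrix (Fin m) (Fin n) ℝ} {V : Matrix (Fin m) (Fin n) ℝ}
    {bs : ℕ → E m} {b : E m}
    (hV : ∀ i j, Filter.Tendsto (fun k => Vs k i j) Filter.atTop (nhds (V i j)))
    (hb : Filter.Tendsto bs Filter.atTop (nhds b)) (x : E n) :
    Filter.Tendsto (fun k => phiAff (Vs k) (bs k) x) Filter.atTop (nhds (phiAff V b x)) := by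
  have hbc : ∀ i, Filter.Tendsto (fun k => (EuclideanSpace.equiv (Fin m) ℝ) (bs k) i)
      Filter.atTop (nhds ((EuclideanSpace.equiv (Fin m) ℝ) b i)) := by
    intro i
    have h1 := ((EuclideanSpace.equiv (Fin m) ℝ).continuous.tendsto b).comp hb
    exact tendsto_pi_nhds.mp h1 i
  have key : Filter.Tendsto
      (fun k => ((Vs k).mulVec ((EuclideanSpace.equiv (Fin n) ℝ) x)
        + (EuclideanSpace.equiv (Fin m) ℝ) (bs k)))
      Filter.atTop (nhds (V.mulVec ((EuclideanSpace.equiv (Fin n) ℝ) x)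
        + (EuclideanSpace.equiv (Fin m) ℝ) b)) := by
    rw [tendsto_pi_nhds]
    intro i
    simp only [Pi.add_apply, Matrix.mulVec, dotProduct]
    exact (tendsto_finset_sum _ (fun j _ => (hV i j).mul tendsto_const_nhds)).add (hbc i)
  simp only [phiAff]
  exact (((EuclideanSpace.equiv (Fin m) ℝ).symm.continuous.tendsto _).comp key)

lemma wd_nonneg (p : ℝ) {k : ℕ} (μ β : Measure (E k)) :
    0 ≤ wassersteinDist p μ β := by
  apply Real.sInf_nonneg
  rintro r ⟨γ, -, -, rfl⟩
  exact Real.rpow_nonneg (integral_nonneg fun z => Real.rpow_nonneg (norm_nonneg _) p) _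

lemma wd_self (hp : 1 ≤ p) {k : ℕ} (μ : Measure (E k)) [IsProbabilityMeasure μ] :
    wassersteinDist p μ μ = 0 := by
  have hp0 : p ≠ 0 := by intro h; rw [h] at hp; linarith
  apply le_antisymm _ (wd_nonneg p μ μ)
  apply csInf_le
  · exact ⟨0, by
      rintro r ⟨γ, -, -, rfl⟩
      exact Real.rpow_nonneg (integral_nonneg fun z => Real.rpow_nonneg (norm_nonneg _) p) _⟩
  · have hdiag : Measurable (fun x : E k => (x, x)) := measurable_id.prodMk measurable_id
    refine ⟨μ.map (fun x => (x, x)), ?_, ?_, ?_⟩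
    · rw [Measure.map_map measurable_fst hdiag]
      simp [Function.comp_def]
    · rw [Measure.map_map measurable_snd hdiag]
      simp [Function.comp_def]
    · have hc : Continuous (fun z : E k × E k => ‖z.1 - z.2‖ ^ p) :=
        (continuous_norm_rpow hp).comp (continuous_fst.sub continuous_snd)
      rw [integral_map hdiag.aemeasurable hc.aestronglyMeasurable]
      simp only [sub_self, norm_zero, Real.zero_rpow hp0, integral_zero]
      rw [Real.zero_rpow (by positivity : (1:ℝ)/p ≠ 0)]

lemma exists_coupling_of_lt (hp : 1 ≤ p) {k : ℕ} {μ β : Measure (E k)}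
    [IsProbabilityMeasure μ] [IsProbabilityMeasure β] {δ : ℝ} (hδ : 0 < δ)
    (h : wassersteinDist p μ β < δ) :
    ∃ γ : Measure (E k × E k), γ.map Prod.fst = μ ∧ γ.map Prod.snd = β ∧
      ∫ z, ‖z.1 - z.2‖ ^ p ∂γ < δ ^ p := by
  have hp0 : (0:ℝ) < p := by linarith
  rw [wassersteinDist] at h
  have hne : Set.Nonempty {r : ℝ | ∃ γ : Measure (E k × E k),
      γ.map Prod.fst = μ ∧ γ.map Prod.snd = β ∧
      r = (∫ z, ‖z.1 - z.2‖ ^ p ∂γ) ^ (1 / p)} := by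
    refine ⟨_, μ.prod β, ?_, ?_, rfl⟩
    · exact Measure.fst_prod
    · exact Measure.snd_prod
  obtain ⟨r, ⟨γ, h1, h2, rfl⟩, hrlt⟩ := exists_lt_of_csInf_lt hne h
  refine ⟨γ, h1, h2, ?_⟩
  have hI : (0:ℝ) ≤ ∫ z, ‖z.1 - z.2‖ ^ p ∂γ :=
    integral_nonneg fun z => Real.rpow_nonneg (norm_nonneg _) p
  have h3 : ((∫ z, ‖z.1 - z.2‖ ^ p ∂γ) ^ ((1:ℝ) / p)) ^ p < δ ^ p :=
    Real.rpow_lt_rpow (Real.rpow_nonneg hI _) hrlt hp0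
  rwa [← Real.rpow_mul hI, one_div, inv_mul_cancel₀ (ne_of_gt hp0), Real.rpow_one] at h3

end euclid

end AW
end

theorem augmented_wasserstein_eq_zero_iff {m n : ℕ} (hmn : m ≤ n) (p : ℝ) (hp : 1 ≤ p)
    (μ : Measure (EuclideanSpace ℝ (Fin m))) (ν : Measure (EuclideanSpace ℝ (Fin n)))
    [IsProbabilityMeasure μ] [IsProbabilityMeasure ν]
    (hμ : Integrable (fun x => ‖x‖ ^ p) μ) (hν : Integrable (fun x => ‖x‖ ^ p) ν) :
    sInf {r : ℝ | ∃ (V : Matrix (Fin m) (Fin n) ℝ) (b : EuclideanSpace ℝ (Fin m)),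
        V * V.transpose = 1 ∧ r = wassersteinDist p μ (ν.map (phiAff V b))} = 0 ↔
    ∃ (V : Matrix (Fin m) (Fin n) ℝ) (b : EuclideanSpace ℝ (Fin m)),
        V * V.transpose = 1 ∧ ν.map (phiAff V b) = μ := by
  classical
  have hp0 : (0:ℝ) < p := by linarith
  set S := {r : ℝ | ∃ (V : Matrix (Fin m) (Fin n) ℝ) (b : EuclideanSpace ℝ (Fin m)),
      V * V.transpose = 1 ∧ r = wassersteinDist p μ (ν.map (phiAff V b))} with hSdef
  have hSnonneg : ∀ r ∈ S, 0 ≤ r := by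
    rintro r ⟨V, b, hV, rfl⟩
    exact AW.wd_nonneg p _ _
  constructor
  · -- hard direction
    intro h0
    obtain ⟨V0, hV0⟩ := AW.exists_ortho (m := m) (n := n) hmn
    have hSne : S.Nonempty := ⟨_, V0, 0, hV0, rfl⟩
    -- Step 1: select approximating sequence
    have hex : ∀ k : ℕ, ∃ (V : Matrix (Fin m) (Fin n) ℝ) (b : EuclideanSpace ℝ (Fin m))
        (γ : Measure (EuclideanSpace ℝ (Fin m) × EuclideanSpace ℝ (Fin m))),
        V * V.transpose = 1 ∧ γ.map Prod.fst = μ ∧ γ.map Prod.snd = ν.map (phiAff V b) ∧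
        ∫ z, ‖z.1 - z.2‖ ^ p ∂γ ≤ (1 / ((k:ℝ)+1)) ^ (p + 1 : ℝ) := by
      intro k
      set ε : ℝ := 1 / ((k:ℝ)+1) with hεdef
      have hεpos : 0 < ε := by positivity
      set δ : ℝ := ε ^ ((p+1)/p) with hδdef
      have hδpos : 0 < δ := Real.rpow_pos_of_pos hεpos _
      obtain ⟨s, hsS, hslt⟩ := exists_lt_of_csInf_lt hSne (by rw [h0]; exact hδpos)
      obtain ⟨V, b, hV, rfl⟩ := hsS
      obtain ⟨γ, h1, h2, hint⟩ := AW.exists_coupling_of_lt hp hδpos hslt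
      refine ⟨V, b, γ, hV, h1, h2, ?_⟩
      have hδp : δ ^ p = ε ^ (p + 1 : ℝ) := by
        rw [hδdef, ← Real.rpow_mul hεpos.le, div_mul_cancel₀ _ (ne_of_gt hp0)]
      exact le_of_lt (hδp ▸ hint)
    choose Vs bs γs hVs h1s h2s hcosts using hex
    have hβmom : ∀ k, Integrable (fun y => ‖y‖ ^ p) (ν.map (phiAff (Vs k) (bs k))) :=
      fun k => AW.moment_map hp ν hν _ _
    -- Step 2: boundedness of the translations
    set B : ℝ := ‖∫ x, x ∂μ‖ + 2 + Real.sqrt m * ∑ j, |(∫ x, x ∂ν) j| with hBdef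
    have hbbound : ∀ k, ‖bs k‖ ≤ B := by
      intro k
      have hmean := AW.mean_diff_le hp hμ (hβmom k) (h1s k) (h2s k)
      have hcost1 : ∫ z, ‖z.1 - z.2‖ ^ p ∂(γs k) ≤ 1 := by
        refine le_trans (hcosts k) ?_
        apply Real.rpow_le_one (by positivity) ?_ (by linarith)
        rw [div_le_one (by positivity)]
        simp [Nat.cast_nonneg]
      have heq := AW.integral_map_phiAff hp ν hν (Vs k) (bs k)
      have hb : bs k = (∫ y, y ∂(ν.map (phiAff (Vs k) (bs k)))) -
          AW.matCLM (Vs k) (∫ x, x ∂ν) := by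
        rw [heq]; abel
      have hVb : ‖AW.matCLM (Vs k) (∫ x, x ∂ν)‖ ≤ Real.sqrt m * ∑ j, |(∫ x, x ∂ν) j| :=
        AW.norm_matCLM_le (AW.entries_le_one (hVs k)) _
      have h5 : ‖(∫ y, y ∂(ν.map (phiAff (Vs k) (bs k)))) - AW.matCLM (Vs k) (∫ x, x ∂ν)‖ ≤
          ‖∫ y, y ∂(ν.map (phiAff (Vs k) (bs k)))‖ + ‖AW.matCLM (Vs k) (∫ x, x ∂ν)‖ :=
        norm_sub_le _ _
      have h6 : ‖∫ y, y ∂(ν.map (phiAff (Vs k) (bs k)))‖ ≤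
          ‖∫ x, x ∂μ‖ + ‖(∫ x, x ∂μ) - ∫ y, y ∂(ν.map (phiAff (Vs k) (bs k)))‖ := by
        have h7 := norm_sub_le (∫ x, x ∂μ)
          ((∫ x, x ∂μ) - ∫ y, y ∂(ν.map (phiAff (Vs k) (bs k))))
        simpa [sub_sub_cancel] using h7
      rw [hb, hBdef]
      have := hmean
      linarith
    -- Step 3: compactness for the matrices
    set u : ℕ → (Fin m → Fin n → ℝ) := fun k i j => Vs k i j with hu
    have hub : ∀ k, u k ∈ Metric.closedBall (0 : Fin m → Fin n → ℝ) 1 := by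
      intro k
      rw [Metric.mem_closedBall, dist_zero_right]
      refine (pi_norm_le_iff_of_nonneg zero_le_one).mpr fun i => ?_
      refine (pi_norm_le_iff_of_nonneg zero_le_one).mpr fun j => ?_
      rw [Real.norm_eq_abs]
      exact AW.entries_le_one (hVs k) i j
    obtain ⟨W, -, σ1, hσ1mono, hσ1tend⟩ :=
      tendsto_subseq_of_bounded Metric.isBounded_closedBall hub
    have hWentries : ∀ i j, Filter.Tendsto (fun k => Vs (σ1 k) i j) Filter.atTop
        (nhds (W i j)) := by
      intro i j
      have h1 := tendsto_pi_nhds.mp hσ1tend i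
      exact tendsto_pi_nhds.mp h1 j
    set Vlim : Matrix (Fin m) (Fin n) ℝ := Matrix.of W with hVlimdef
    have hVlim : Vlim * Vlim.transpose = 1 := by
      ext i i'
      rw [Matrix.mul_apply]
      simp only [Matrix.transpose_apply]
      have hconv : Filter.Tendsto (fun k => ∑ j, Vs (σ1 k) i j * Vs (σ1 k) i' j)
          Filter.atTop (nhds (∑ j, W i j * W i' j)) :=
        tendsto_finset_sum _ fun j _ => (hWentries i j).mul (hWentries i' j)
      have hconst : ∀ k, ∑ j, Vs (σ1 k) i j * Vs (σ1 k) i' j =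
          (1 : Matrix (Fin m) (Fin m) ℝ) i i' := by
        intro k
        have h9 : ∑ j, Vs (σ1 k) i j * Vs (σ1 k) i' j =
            (Vs (σ1 k) * (Vs (σ1 k)).transpose) i i' := by
          rw [Matrix.mul_apply]
          simp only [Matrix.transpose_apply]
        rw [h9, hVs (σ1 k)]
      have hconv2 : Filter.Tendsto (fun k => ∑ j, Vs (σ1 k) i j * Vs (σ1 k) i' j)
          Filter.atTop (nhds ((1 : Matrix (Fin m) (Fin m) ℝ) i i')) := by
        simp only [hconst]
        exact tendsto_const_nhds
      exact tendsto_nhds_unique hconv hconv2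
    -- Step 4: compactness for the translations
    have hb2 : ∀ k, bs (σ1 k) ∈ Metric.closedBall (0 : EuclideanSpace ℝ (Fin m)) B := by
      intro k
      rw [Metric.mem_closedBall, dist_zero_right]
      exact hbbound (σ1 k)
    obtain ⟨blim, -, σ2, hσ2mono, hσ2tend⟩ :=
      tendsto_subseq_of_bounded Metric.isBounded_closedBall hb2
    set τ : ℕ → ℕ := σ1 ∘ σ2 with hτdef
    have hτmono : StrictMono τ := hσ1mono.comp hσ2mono
    have hVτ : ∀ i j, Filter.Tendsto (fun k => Vs (τ k) i j) Filter.atTop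
        (nhds (Vlim i j)) := fun i j => (hWentries i j).comp hσ2mono.tendsto_atTop
    have hbτ : Filter.Tendsto (fun k => bs (τ k)) Filter.atTop (nhds blim) := hσ2tend
    -- Step 5: identify the limit
    refine ⟨Vlim, blim, hVlim, ?_⟩
    refine AW.ext_of_closed _ _ fun C hC => ?_
    rcases C.eq_empty_or_nonempty with rfl | hne
    · simp
    have hkey : ∀ j : ℕ, ∫ x, AW.moll C (1/((j:ℝ)+1)) x ∂(ν.map (phiAff Vlim blim)) =
        ∫ x, AW.moll C (1/((j:ℝ)+1)) x ∂μ := by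
      intro j
      set δj : ℝ := 1/((j:ℝ)+1) with hδjdef
      have hδj : 0 < δj := by positivity
      set g := AW.moll C δj with hgdef
      set K : NNReal := Real.toNNReal (1/δj) with hKdef
      set L : ℝ := ∫ x, g x ∂μ with hLdef
      set a : ℕ → ℝ := fun k => ∫ y, g y ∂(ν.map (phiAff (Vs (τ k)) (bs (τ k)))) with hadef
      have hε9 : ∀ k : ℕ, (0:ℝ) < 1 / ((τ k : ℝ) + 1) := fun k => by positivity
      have hbd : ∀ k, ‖a k - L‖ ≤ ((K:ℝ) + 2) * (1 / ((τ k : ℝ) + 1)) := by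
        intro k
        have h11 := AW.key_lipschitz_bound hp hμ (hβmom (τ k)) (h1s (τ k)) (h2s (τ k))
          (AW.moll_lipschitz C hδj) (AW.moll_nonneg C δj) (AW.moll_le_one C hδj)
          (hε9 k) (hcosts (τ k))
        rw [Real.norm_eq_abs, abs_sub_comm]
        calc |L - a k| ≤ (K:ℝ) * (1 / ((τ k : ℝ) + 1)) + 2 * (1 / ((τ k : ℝ) + 1)) := h11
          _ = ((K:ℝ) + 2) * (1 / ((τ k : ℝ) + 1)) := by ring
      have htend0 : Filter.Tendsto (fun k => ((K:ℝ) + 2) * (1 / ((τ k : ℝ) + 1)))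
          Filter.atTop (nhds 0) := by
        have h8 : Filter.Tendsto (fun k : ℕ => 1/((k:ℝ)+1)) Filter.atTop (nhds 0) :=
          tendsto_one_div_add_atTop_nhds_zero_nat
        have h9 : Filter.Tendsto (fun k : ℕ => 1/((τ k : ℝ)+1)) Filter.atTop (nhds 0) :=
          h8.comp hτmono.tendsto_atTop
        have h10 := h9.const_mul ((K:ℝ) + 2)
        simpa using h10
      have hlim1 : Filter.Tendsto a Filter.atTop (nhds L) := by
        rw [← tendsto_sub_nhds_zero_iff]
        exact squeeze_zero_norm hbd htend0
      have hlim2 : Filter.Tendsto a Filter.atTop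
          (nhds (∫ y, g y ∂(ν.map (phiAff Vlim blim)))) := by
        have ha : ∀ k, a k = ∫ x, g (phiAff (Vs (τ k)) (bs (τ k)) x) ∂ν := fun k =>
          integral_map (AW.measurable_phiAff _ _).aemeasurable
            (AW.moll_continuous C hδj).aestronglyMeasurable
        have hlast : ∫ y, g y ∂(ν.map (phiAff Vlim blim)) =
            ∫ x, g (phiAff Vlim blim x) ∂ν :=
          integral_map (AW.measurable_phiAff _ _).aemeasurable
            (AW.moll_continuous C hδj).aestronglyMeasurable
        rw [hlast]
        refine Filter.Tendsto.congr (fun k => (ha k).symm) ?_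
        refine tendsto_integral_of_dominated_convergence (fun _ => (1:ℝ))
          (fun k => ((AW.moll_continuous C hδj).comp
            (AW.continuous_phiAff _ _)).aestronglyMeasurable)
          (integrable_const 1) (fun k => ?_) ?_
        · filter_upwards with x
          rw [Real.norm_eq_abs, abs_of_nonneg (AW.moll_nonneg _ _ _)]
          exact AW.moll_le_one _ hδj _
        · filter_upwards with x
          exact ((AW.moll_continuous C hδj).tendsto _).comp (AW.tendsto_phiAff hVτ hbτ x)
      exact tendsto_nhds_unique hlim2 hlim1
    have t1 := AW.tendsto_integral_moll hC hne μ
    have t2 := AW.tendsto_integral_moll hC hne (ν.map (phiAff Vlim blim))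
    have t2' : Filter.Tendsto (fun j : ℕ => ∫ x, AW.moll C (1/((j:ℝ)+1)) x ∂μ)
        Filter.atTop (nhds ((ν.map (phiAff Vlim blim)) C).toReal) :=
      Filter.Tendsto.congr (fun j => hkey j) t2
    have hfin := tendsto_nhds_unique t2' t1
    exact (ENNReal.toReal_eq_toReal_iff' (measure_ne_top _ _) (measure_ne_top _ _)).mp hfin
  · -- easy direction
    rintro ⟨V, b, hV, hmap⟩
    apply le_antisymm
    · apply csInf_le ⟨0, fun r hr => hSnonneg r hr⟩
      refine ⟨V, b, hV, ?_⟩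
      rw [hmap, AW.wd_self hp]
    · exact Real.sInf_nonneg hSnonneg
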